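/- arXiv:2202.05230 — 2 statements merged into one kernel-verified Lean document; each statement's English description precedes it below -/
import Mathlib

section
/- Let R be a commutative ring and let I ⊆ R be an ideal equipped with a divided power structure γ (a family of maps γₙ : I → R, n ≥ 0, satisfying the divided power axioms, so that n!·γₙ(x) = xⁿ for all x ∈ I). Let T ⊆ R denote the ideal of additive torsion elements of R, i.e. T = {r ∈ R : n·r = 0 for some positive integer n}. Then the image ideal Ī of I under the quotient map q : R → R/T carries a divided power structure γ̄ compatible with γ, i.e. a divided power structure γ̄ on Ī such that γ̄ₙ(q(x)) = q(γₙ(x)) for every n ≥ 0 and every x ∈ I. -/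
open Finset

/-- Let `R` be a commutative ring and `I ⊆ R` an ideal equipped with a
divided power structure `γ`. Let `T ⊆ R` be the ideal of additive torsion elements
(elements killed by some positive integer). Then the image of `I` in `R/T` carries a
divided power structure `γ̄` compatible with `γ`, i.e. `γ̄ₙ(q x) = q (γₙ x)` for all
`n ≥ 0` and `x ∈ I`, where `q : R → R/T` is the quotient map. -/
theorem dividedPowers_quotient_torsion {R : Type*} [CommRing R] (I : Ideal R)
    (γ : DividedPowers I) (T : Ideal R)
    (hT : ∀ r : R, r ∈ T ↔ ∃ n : ℕ, 0 < n ∧ n • r = 0) :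
    ∃ γbar : DividedPowers (I.map (Ideal.Quotient.mk T)),
      ∀ (n : ℕ) (x : R), x ∈ I →
        γbar.dpow n (Ideal.Quotient.mk T x) = Ideal.Quotient.mk T (γ.dpow n x) := by
  classical
  set q := Ideal.Quotient.mk T with hq
  have hsurj : Function.Surjective q := Ideal.Quotient.mk_surjective
  -- torsion is preserved by divided powers
  have hTor : ∀ (n : ℕ) (d : R), d ∈ I → d ∈ T → n ≠ 0 → γ.dpow n d ∈ T := by
    intro n d hdI hdT hn
    obtain ⟨m, hm, hmd⟩ := (hT d).mp hdT
    refine (hT _).mpr ⟨m ^ n, pow_pos hm n, ?_⟩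
    have : (m : R) ^ n * γ.dpow n d = γ.dpow n ((m : R) * d) := (γ.dpow_mul (n := n) hdI).symm
    rw [nsmul_eq_mul, Nat.cast_pow, this]
    have hmd' : (m : R) * d = 0 := by rwa [← nsmul_eq_mul]
    rw [hmd', γ.dpow_eval_zero hn]
  -- congruence
  have hcong : ∀ (n : ℕ) (x x' : R), x ∈ I → x' ∈ I → q x = q x' →
      q (γ.dpow n x) = q (γ.dpow n x') := by
    intro n x x' hx hx' hqe
    have hd : x - x' ∈ T := Ideal.Quotient.eq.mp hqe
    have hdI : x - x' ∈ I := I.sub_mem hx hx'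
    have hx2 : x = x' + (x - x') := by ring
    rw [hx2, γ.dpow_add (n := n) hx' hdI, map_sum]
    rw [Finset.sum_eq_single (n, 0)]
    · simp [γ.dpow_zero hdI]
    · rintro ⟨i, j⟩ hij hne
      have hj : j ≠ 0 := by
        rintro rfl
        exact hne (by simpa using Finset.HasAntidiagonal.mem_antidiagonal.mp hij)
      rw [map_mul, Ideal.Quotient.eq_zero_iff_mem.mpr (hTor j _ hdI hd hj), mul_zero]
    · intro h
      exact absurd (Finset.HasAntidiagonal.mem_antidiagonal.mpr (by simp)) h
  -- lift of elements of the image ideal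
  have hmem : ∀ y : R ⧸ T, y ∈ I.map q → ∃ x, x ∈ I ∧ q x = y := by
    intro y hy
    exact (Ideal.mem_map_iff_of_surjective q hsurj).mp hy
  set D : ℕ → R ⧸ T → R ⧸ T := fun n y =>
    if hy : y ∈ I.map q then q (γ.dpow n (hmem y hy).choose) else 0 with hD
  have hmemq : ∀ x : R, x ∈ I → q x ∈ I.map q := fun x hx => Ideal.mem_map_of_mem q hx
  have hDq : ∀ (n : ℕ) (x : R), x ∈ I → D n (q x) = q (γ.dpow n x) := by
    intro n x hx
    have hy := hmemq x hx
    rw [hD]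
    simp only [dif_pos hy]
    exact hcong n _ x (hmem _ hy).choose_spec.1 hx (hmem _ hy).choose_spec.2
  refine ⟨{ dpow := D
            dpow_null := ?_
            dpow_zero := ?_
            dpow_one := ?_
            dpow_mem := ?_
            dpow_add := ?_
            dpow_mul := ?_
            mul_dpow := ?_
            dpow_comp := ?_ }, fun n x hx => hDq n x hx⟩
  · intro n y hy
    simp [hD, dif_neg hy]
  · intro y hy
    obtain ⟨x, hx, rfl⟩ := hmem y hy
    rw [hDq 0 x hx, γ.dpow_zero hx, map_one]
  · intro y hy
    obtain ⟨x, hx, rfl⟩ := hmem y hy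
    rw [hDq 1 x hx, γ.dpow_one hx]
  · intro n y hn hy
    obtain ⟨x, hx, rfl⟩ := hmem y hy
    rw [hDq n x hx]
    exact hmemq _ (γ.dpow_mem hn hx)
  · intro n y z hy hz
    obtain ⟨x, hx, rfl⟩ := hmem y hy
    obtain ⟨w, hw, rfl⟩ := hmem z hz
    rw [← map_add, hDq n _ (I.add_mem hx hw), γ.dpow_add (n := n) hx hw, map_sum]
    exact Finset.sum_congr rfl fun k _ => by rw [map_mul, hDq _ _ hx, hDq _ _ hw]
  · intro n a y hy
    obtain ⟨x, hx, rfl⟩ := hmem y hy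
    obtain ⟨b, rfl⟩ := hsurj a
    rw [← map_mul, hDq n _ (I.mul_mem_left b hx), γ.dpow_mul (n := n) hx, map_mul, map_pow,
      hDq n x hx]
  · intro m n y hy
    obtain ⟨x, hx, rfl⟩ := hmem y hy
    rw [hDq m x hx, hDq n x hx, ← map_mul, γ.mul_dpow (m := m) (n := n) hx, map_mul, map_natCast,
      hDq _ x hx]
  · intro m n y hn hy
    obtain ⟨x, hx, rfl⟩ := hmem y hy
    rw [hDq n x hx, hDq m _ (γ.dpow_mem hn hx), γ.dpow_comp (m := m) hn hx, map_mul,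
      map_natCast, hDq _ x hx]
end

section
/- Let g be a positive integer and let ℓ be a prime number. Consider the real symplectic group Sp₂g(ℝ) = {M ∈ GL₂g(ℝ) : M · J · Mᵀ = J}, where J = [[0, 1_g], [−1_g, 0]], topologized as a subspace of the space of 2g×2g real matrices. Then the subgroup Sp₂g(ℤ[1/ℓ]) consisting of those symplectic matrices all of whose entries lie in ℤ[1/ℓ] ⊆ ℝ (i.e. each entry is of the form a/ℓᵏ with a ∈ ℤ, k ∈ ℕ) is dense in Sp₂g(ℝ): the closure in the space of 2g×2g real matrices of the set of symplectic matrices with entries in ℤ[1/ℓ] contains every real symplectic matrix. -/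
open Matrix Filter Topology

namespace SympDense

def inR (ℓ : ℕ) (x : ℝ) : Prop := ∃ (a : ℤ) (k : ℕ), x = (a : ℝ) / ℓ ^ k

variable {ℓ : ℕ}

lemma lne (hℓ2 : 2 ≤ ℓ) : (ℓ:ℝ) ≠ 0 := by
  have : (0:ℝ) < (ℓ:ℝ) := by exact_mod_cast Nat.lt_of_lt_of_le (by norm_num) hℓ2
  exact ne_of_gt this

lemma inR_zero : inR ℓ 0 := ⟨0, 0, by norm_num⟩
lemma inR_one : inR ℓ 1 := ⟨1, 0, by norm_num⟩

lemma inR_neg {x : ℝ} (h : inR ℓ x) : inR ℓ (-x) := by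
  obtain ⟨a, k, rfl⟩ := h
  exact ⟨-a, k, by push_cast; ring⟩

lemma inR_add (hℓ2 : 2 ≤ ℓ) {x y : ℝ} (hx : inR ℓ x) (hy : inR ℓ y) : inR ℓ (x + y) := by
  obtain ⟨a, k, rfl⟩ := hx
  obtain ⟨b, m, rfl⟩ := hy
  refine ⟨a * ℓ ^ m + b * ℓ ^ k, k + m, ?_⟩
  have h := lne hℓ2
  push_cast
  rw [div_add_div _ _ (pow_ne_zero k h) (pow_ne_zero m h), ← pow_add]
  ring_nf

lemma inR_mul (hℓ2 : 2 ≤ ℓ) {x y : ℝ} (hx : inR ℓ x) (hy : inR ℓ y) : inR ℓ (x * y) := by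
  obtain ⟨a, k, rfl⟩ := hx
  obtain ⟨b, m, rfl⟩ := hy
  refine ⟨a * b, k + m, ?_⟩
  have h := lne hℓ2
  push_cast
  rw [div_mul_div_comm, ← pow_add]

lemma inR_sum (hℓ2 : 2 ≤ ℓ) {s : Finset α} {f : α → ℝ} (h : ∀ i ∈ s, inR ℓ (f i)) :
    inR ℓ (∑ i ∈ s, f i) := by
  classical
  exact Finset.sum_induction f (inR ℓ) (fun a b ha hb => inR_add hℓ2 ha hb) inR_zero h

/-- the ℤ[1/ℓ]-approximation of a real number at level n -/
noncomputable def approx (ℓ : ℕ) (x : ℝ) (n : ℕ) : ℝ := (round (x * ℓ ^ n) : ℤ) / ℓ ^ n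

lemma inR_approx (x : ℝ) (n : ℕ) : inR ℓ (approx ℓ x n) := ⟨_, n, rfl⟩

lemma tendsto_approx (hℓ2 : 2 ≤ ℓ) (x : ℝ) : Tendsto (approx ℓ x) atTop (𝓝 x) := by
  have hl1 : (1:ℝ) < (ℓ:ℝ) := by
    have : (2:ℝ) ≤ (ℓ:ℝ) := by exact_mod_cast hℓ2
    linarith
  have hl0 : (0:ℝ) < (ℓ:ℝ) := by linarith
  have key : ∀ n, ‖approx ℓ x n - x‖ ≤ ((ℓ:ℝ)⁻¹) ^ n := by
    intro n
    have hpow : (0:ℝ) < (ℓ:ℝ) ^ n := by positivity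
    have h1 : approx ℓ x n - x = -((x * ℓ ^ n - (round (x * ℓ ^ n) : ℤ)) / ℓ ^ n) := by
      rw [approx]; field_simp; ring
    rw [h1, norm_neg, norm_div, Real.norm_eq_abs, Real.norm_eq_abs, abs_of_pos hpow]
    have h2 : |x * ℓ ^ n - (round (x * ℓ ^ n) : ℤ)| ≤ 1 / 2 := abs_sub_round _
    calc |x * ℓ ^ n - (round (x * ℓ ^ n) : ℤ)| / (ℓ:ℝ) ^ n
        ≤ (1/2) / (ℓ:ℝ) ^ n := by gcongr
      _ ≤ 1 / (ℓ:ℝ) ^ n := by gcongr; norm_num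
      _ = ((ℓ:ℝ)⁻¹) ^ n := by rw [one_div, inv_pow]
  have h0 : Tendsto (fun n => approx ℓ x n - x) atTop (𝓝 0) :=
    squeeze_zero_norm key (tendsto_pow_atTop_nhds_zero_of_lt_one (by positivity)
      (by rw [inv_lt_one_iff₀]; right; exact hl1))
  have := h0.add (tendsto_const_nhds (x := x) (f := atTop))
  simpa using this

section Matrices

variable (g : ℕ)

abbrev Mat (g : ℕ) := Matrix (Fin g ⊕ Fin g) (Fin g ⊕ Fin g) ℝ

/-- standard symplectic form matrix -/
def Jm (g : ℕ) : Mat g := Matrix.fromBlocks 0 1 (-1) 0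

/-- symplectic matrices with entries in ℤ[1/ℓ] -/
def S (g ℓ : ℕ) : Set (Mat g) :=
  {N | N * Jm g * Nᵀ = Jm g ∧ ∀ i j, inR ℓ (N i j)}

lemma one_S : (1 : Mat g) ∈ S g ℓ := by
  constructor
  · simp [Jm]
  · intro i j
    rw [Matrix.one_apply]
    split
    · exact inR_one
    · exact inR_zero

lemma S_mul (hℓ2 : 2 ≤ ℓ) {M N : Mat g} (hM : M ∈ S g ℓ) (hN : N ∈ S g ℓ) :
    M * N ∈ S g ℓ := by
  obtain ⟨hM1, hM2⟩ := hM
  obtain ⟨hN1, hN2⟩ := hN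
  constructor
  · have h : M * N * Jm g * (M * N)ᵀ = M * (N * Jm g * Nᵀ) * Mᵀ := by
      rw [Matrix.transpose_mul]
      noncomm_ring
    rw [h, hN1, hM1]
  · intro i j
    rw [Matrix.mul_apply]
    exact inR_sum hℓ2 fun k _ => inR_mul hℓ2 (hM2 i k) (hN2 k j)

/-- S as a submonoid -/
def Smon (g ℓ : ℕ) (hℓ2 : 2 ≤ ℓ) : Submonoid (Mat g) where
  carrier := S g ℓ
  one_mem' := one_S g
  mul_mem' := fun h1 h2 => S_mul g hℓ2 h1 h2

lemma C_mul (hℓ2 : 2 ≤ ℓ) {M N : Mat g} (hM : M ∈ closure (S g ℓ)) (hN : N ∈ closure (S g ℓ)) :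
    M * N ∈ closure (S g ℓ) := by
  have hc : ((Smon g ℓ hℓ2).topologicalClosure : Set (Mat g)) = closure (S g ℓ) := rfl
  rw [← hc] at hM hN ⊢
  exact mul_mem hM hN

lemma tendsto_mat {f : ℕ → Mat g} {M : Mat g}
    (h : ∀ i j, Tendsto (fun k => f k i j) atTop (𝓝 (M i j))) :
    Tendsto f atTop (𝓝 M) := by
  refine tendsto_pi_nhds.2 ?_
  intro i
  rw [tendsto_pi_nhds]
  exact h i

lemma mem_C_of_seq {f : ℕ → Mat g} {M : Mat g} (hf : ∀ n, f n ∈ S g ℓ)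
    (h : Tendsto f atTop (𝓝 M)) : M ∈ closure (S g ℓ) :=
  mem_closure_of_tendsto h (Eventually.of_forall hf)

/-- upper block unipotent -/
def gU (g : ℕ) (B : Matrix (Fin g) (Fin g) ℝ) : Mat g := Matrix.fromBlocks 1 B 0 1
/-- lower block unipotent -/
def gL (g : ℕ) (C : Matrix (Fin g) (Fin g) ℝ) : Mat g := Matrix.fromBlocks 1 0 C 1
/-- block diagonal Levi element -/
noncomputable def gD (g : ℕ) (E : Matrix (Fin g) (Fin g) ℝ) : Mat g := Matrix.fromBlocks E 0 0 (E⁻¹)ᵀ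

lemma gU_sp (B : Matrix (Fin g) (Fin g) ℝ) (hB : Bᵀ = B) :
    gU g B * Jm g * (gU g B)ᵀ = Jm g := by
  simp only [gU, Jm, fromBlocks_transpose, fromBlocks_multiply]
  simp [hB]

lemma gL_sp (C : Matrix (Fin g) (Fin g) ℝ) (hC : Cᵀ = C) :
    gL g C * Jm g * (gL g C)ᵀ = Jm g := by
  simp only [gL, Jm, fromBlocks_transpose, fromBlocks_multiply]
  simp [hC]

lemma blockdiag_sp (E F : Matrix (Fin g) (Fin g) ℝ) (h : E * Fᵀ = 1) :
    Matrix.fromBlocks E 0 0 F * Jm g * (Matrix.fromBlocks E 0 0 F)ᵀ = Jm g := by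
  have h2 : F * Eᵀ = 1 := by
    have := congrArg Matrix.transpose h
    simpa using this
  simp only [Jm, fromBlocks_transpose, fromBlocks_multiply]
  simp [h, h2]

lemma inR_one_entry {n : Type*} [DecidableEq n] (i j : n) :
    inR ℓ ((1 : Matrix n n ℝ) i j) := by
  rw [Matrix.one_apply]
  split
  · exact inR_one
  · exact inR_zero

/-- entrywise approximation of a matrix -/
noncomputable def approxM (ℓ : ℕ) {n m : Type*} (B : Matrix n m ℝ) (k : ℕ) : Matrix n m ℝ :=
  Matrix.of fun i j => approx ℓ (B i j) k

lemma approxM_apply {n m : Type*} (B : Matrix n m ℝ) (k : ℕ) (i : n) (j : m) :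
    approxM ℓ B k i j = approx ℓ (B i j) k := rfl

lemma tendsto_approxM (hℓ2 : 2 ≤ ℓ) {n m : Type*} (B : Matrix n m ℝ) (i : n) (j : m) :
    Tendsto (fun k => approxM ℓ B k i j) atTop (𝓝 (B i j)) := tendsto_approx hℓ2 (B i j)

lemma gU_mem (hℓ2 : 2 ≤ ℓ) (B : Matrix (Fin g) (Fin g) ℝ) (hB : Bᵀ = B) :
    gU g B ∈ closure (S g ℓ) := by
  apply mem_C_of_seq (f := fun k => gU g (approxM ℓ B k))
  · intro k
    constructor
    · apply gU_sp
      ext i j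
      rw [Matrix.transpose_apply, approxM_apply, approxM_apply]
      conv_lhs => rw [← hB, Matrix.transpose_apply]
    · intro i j
      rcases i with i | i <;> rcases j with j | j <;>
        simp only [gU, fromBlocks_apply₁₁, fromBlocks_apply₁₂, fromBlocks_apply₂₁,
          fromBlocks_apply₂₂, Matrix.zero_apply]
      · exact inR_one_entry _ _
      · exact inR_approx _ _
      · exact inR_zero
      · exact inR_one_entry _ _
  · apply tendsto_mat
    intro i j
    rcases i with i | i <;> rcases j with j | j <;>
      simp only [gU, fromBlocks_apply₁₁, fromBlocks_apply₁₂, fromBlocks_apply₂₁,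
        fromBlocks_apply₂₂, Matrix.zero_apply]
    · exact tendsto_const_nhds
    · exact tendsto_approxM hℓ2 B i j
    · exact tendsto_const_nhds
    · exact tendsto_const_nhds

lemma gL_mem (hℓ2 : 2 ≤ ℓ) (C : Matrix (Fin g) (Fin g) ℝ) (hC : Cᵀ = C) :
    gL g C ∈ closure (S g ℓ) := by
  apply mem_C_of_seq (f := fun k => gL g (approxM ℓ C k))
  · intro k
    constructor
    · apply gL_sp
      ext i j
      rw [Matrix.transpose_apply, approxM_apply, approxM_apply]
      conv_lhs => rw [← hC, Matrix.transpose_apply]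
    · intro i j
      rcases i with i | i <;> rcases j with j | j <;>
        simp only [gL, fromBlocks_apply₁₁, fromBlocks_apply₁₂, fromBlocks_apply₂₁,
          fromBlocks_apply₂₂, Matrix.zero_apply]
      · exact inR_one_entry _ _
      · exact inR_zero
      · exact inR_approx _ _
      · exact inR_one_entry _ _
  · apply tendsto_mat
    intro i j
    rcases i with i | i <;> rcases j with j | j <;>
      simp only [gL, fromBlocks_apply₁₁, fromBlocks_apply₁₂, fromBlocks_apply₂₁,
        fromBlocks_apply₂₂, Matrix.zero_apply]
    · exact tendsto_const_nhds
    · exact tendsto_const_nhds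
    · exact tendsto_approxM hℓ2 C i j
    · exact tendsto_const_nhds

lemma stdBasis_transpose {n : Type*} [DecidableEq n] (i j : n) (c : ℝ) :
    (Matrix.single i j c)ᵀ = Matrix.single j i c := by
  ext a b
  rw [Matrix.transpose_apply]
  simp only [Matrix.single, Matrix.of_apply]
  exact if_congr and_comm rfl rfl

lemma transvection_transpose {n : Type*} [DecidableEq n] (i j : n) (c : ℝ) :
    (Matrix.transvection i j c)ᵀ = Matrix.transvection j i c := by
  rw [Matrix.transvection, Matrix.transvection, Matrix.transpose_add, Matrix.transpose_one,
    stdBasis_transpose]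

lemma transvection_inv (i j : Fin g) (h : i ≠ j) (c : ℝ) :
    (Matrix.transvection i j c)⁻¹ = Matrix.transvection i j (-c) := by
  apply Matrix.inv_eq_right_inv
  rw [Matrix.transvection_mul_transvection_same _ _ h, add_neg_cancel, Matrix.transvection_zero]

lemma gD_mul (E₁ E₂ : Matrix (Fin g) (Fin g) ℝ) : gD g (E₁ * E₂) = gD g E₁ * gD g E₂ := by
  simp only [gD, fromBlocks_multiply, Matrix.mul_inv_rev, Matrix.transpose_mul]
  simp

lemma gD_one : gD g 1 = 1 := by
  simp [gD]

lemma inR_transvection_entry (hℓ2 : 2 ≤ ℓ) {n : Type*} [DecidableEq n] (i j : n) {c : ℝ}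
    (hc : inR ℓ c) (a b : n) : inR ℓ (Matrix.transvection i j c a b) := by
  rw [Matrix.transvection, Matrix.add_apply]
  apply inR_add hℓ2 (inR_one_entry _ _)
  simp only [Matrix.single, Matrix.of_apply]
  split
  · exact hc
  · exact inR_zero

lemma gD_transvection_eq (i j : Fin g) (h : i ≠ j) (c : ℝ) :
    gD g (Matrix.transvection i j c) =
      Matrix.fromBlocks (Matrix.transvection i j c) 0 0 (Matrix.transvection j i (-c)) := by
  rw [gD, transvection_inv g i j h, transvection_transpose]

lemma gD_transvection_mem (hℓ2 : 2 ≤ ℓ) (i j : Fin g) (h : i ≠ j) (c : ℝ) :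
    gD g (Matrix.transvection i j c) ∈ closure (S g ℓ) := by
  rw [gD_transvection_eq g i j h]
  apply mem_C_of_seq (f := fun k =>
    Matrix.fromBlocks (Matrix.transvection i j (approx ℓ c k)) 0 0
      (Matrix.transvection j i (-approx ℓ c k)))
  · intro k
    constructor
    · apply blockdiag_sp
      rw [transvection_transpose, Matrix.transvection_mul_transvection_same _ _ h,
        add_neg_cancel, Matrix.transvection_zero]
    · intro a b
      rcases a with a | a <;> rcases b with b | b <;>
        simp only [fromBlocks_apply₁₁, fromBlocks_apply₁₂, fromBlocks_apply₂₁,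
          fromBlocks_apply₂₂, Matrix.zero_apply]
      · exact inR_transvection_entry hℓ2 i j (inR_approx _ _) a b
      · exact inR_zero
      · exact inR_zero
      · exact inR_transvection_entry hℓ2 j i (inR_neg (inR_approx _ _)) a b
  · apply tendsto_mat
    intro a b
    rcases a with a | a <;> rcases b with b | b <;>
      simp only [fromBlocks_apply₁₁, fromBlocks_apply₁₂, fromBlocks_apply₂₁,
        fromBlocks_apply₂₂, Matrix.zero_apply, Matrix.transvection, Matrix.add_apply,
        Matrix.single, Matrix.of_apply]
    · by_cases hab : i = a ∧ j = b
      · simp only [hab, if_true]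
        exact tendsto_const_nhds.add (tendsto_approx hℓ2 c)
      · simp only [hab, if_false]
        exact tendsto_const_nhds
    · exact tendsto_const_nhds
    · exact tendsto_const_nhds
    · by_cases hab : j = a ∧ i = b
      · simp only [hab, if_true]
        exact tendsto_const_nhds.add ((tendsto_approx hℓ2 c).neg)
      · simp only [hab, if_false]
        exact tendsto_const_nhds

def upd1 (g : ℕ) (i : Fin g) (t : ℝ) : Fin g → ℝ := Function.update (fun _ => 1) i t
def upd0 (g : ℕ) (i : Fin g) (t : ℝ) : Fin g → ℝ := Function.update (fun _ => 0) i t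

lemma dblock_mul (a b c d a' b' c' d' : Fin g → ℝ) :
    Matrix.fromBlocks (diagonal a) (diagonal b) (diagonal c) (diagonal d) *
      Matrix.fromBlocks (diagonal a') (diagonal b') (diagonal c') (diagonal d') =
    Matrix.fromBlocks (diagonal (fun k => a k * a' k + b k * c' k))
      (diagonal (fun k => a k * b' k + b k * d' k))
      (diagonal (fun k => c k * a' k + d k * c' k))
      (diagonal (fun k => c k * b' k + d k * d' k)) := by
  rw [fromBlocks_multiply]
  simp only [diagonal_mul_diagonal, diagonal_add]

lemma gU_diag (x : Fin g → ℝ) :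
    gU g (diagonal x) = Matrix.fromBlocks (diagonal (fun _ => 1)) (diagonal x)
      (diagonal (fun _ => 0)) (diagonal (fun _ => 1)) := by
  rw [gU, diagonal_one, diagonal_zero]

lemma gL_diag (x : Fin g → ℝ) :
    gL g (diagonal x) = Matrix.fromBlocks (diagonal (fun _ => 1)) (diagonal (fun _ => 0))
      (diagonal x) (diagonal (fun _ => 1)) := by
  rw [gL, diagonal_one, diagonal_zero]

lemma torus_eq (i : Fin g) (t : ℝ) (ht : t ≠ 0) :
    Matrix.fromBlocks (diagonal (upd1 g i t)) 0 0 (diagonal (upd1 g i t⁻¹)) =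
    gU g (diagonal (upd0 g i t)) * gL g (diagonal (upd0 g i (-t⁻¹))) *
      gU g (diagonal (upd0 g i t)) * gU g (diagonal (upd0 g i (-1))) *
      gL g (diagonal (upd0 g i 1)) * gU g (diagonal (upd0 g i (-1))) := by
  simp only [gU_diag, gL_diag]
  rw [dblock_mul, dblock_mul, dblock_mul, dblock_mul, dblock_mul, ← diagonal_zero,
    fromBlocks_inj]
  refine ⟨?_, ?_, ?_, ?_⟩ <;>
  · apply congrArg diagonal
    funext j
    by_cases hj : j = i
    · subst hj
      simp only [upd0, upd1, Function.update_self]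
      field_simp
      try ring
    · simp only [upd0, upd1, Function.update_of_ne hj]
      try ring

lemma torus_mem (hℓ2 : 2 ≤ ℓ) (i : Fin g) (t : ℝ) (ht : t ≠ 0) :
    Matrix.fromBlocks (diagonal (upd1 g i t)) 0 0 (diagonal (upd1 g i t⁻¹)) ∈
      closure (S g ℓ) := by
  rw [torus_eq g i t ht]
  have hsym : ∀ x : Fin g → ℝ, (diagonal x)ᵀ = diagonal x := fun x => Matrix.diagonal_transpose x
  exact C_mul g hℓ2 (C_mul g hℓ2 (C_mul g hℓ2 (C_mul g hℓ2 (C_mul g hℓ2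
    (gU_mem g hℓ2 _ (hsym _)) (gL_mem g hℓ2 _ (hsym _))) (gU_mem g hℓ2 _ (hsym _)))
    (gU_mem g hℓ2 _ (hsym _))) (gL_mem g hℓ2 _ (hsym _))) (gU_mem g hℓ2 _ (hsym _))

lemma diag_inv (v : Fin g → ℝ) (hv : ∀ i, v i ≠ 0) :
    (diagonal v)⁻¹ = diagonal (fun i => (v i)⁻¹) := by
  apply Matrix.inv_eq_right_inv
  rw [diagonal_mul_diagonal]
  have h1 : (fun i => v i * (v i)⁻¹) = fun _ : Fin g => (1:ℝ) := by
    funext i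
    exact mul_inv_cancel₀ (hv i)
  rw [h1, diagonal_one]

lemma gD_diag_upd1 (i : Fin g) (t : ℝ) (ht : t ≠ 0) :
    gD g (diagonal (upd1 g i t)) =
      Matrix.fromBlocks (diagonal (upd1 g i t)) 0 0 (diagonal (upd1 g i t⁻¹)) := by
  have hv : ∀ j, upd1 g i t j ≠ 0 := by
    intro j
    rcases eq_or_ne j i with rfl | hj
    · simpa [upd1] using ht
    · simp [upd1, Function.update_of_ne hj]
  rw [gD, diag_inv g _ hv, Matrix.diagonal_transpose]
  refine congrArg (Matrix.fromBlocks _ _ _) (congrArg diagonal (funext fun j => ?_))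
  rcases eq_or_ne j i with rfl | hj
  · simp [upd1]
  · simp [upd1, Function.update_of_ne hj]

lemma gD_diag_mem (hℓ2 : 2 ≤ ℓ) (d : Fin g → ℝ) (hd : ∀ i, d i ≠ 0) :
    gD g (diagonal d) ∈ closure (S g ℓ) := by
  classical
  have key : ∀ s : Finset (Fin g),
      gD g (diagonal (fun j => if j ∈ s then d j else 1)) ∈ closure (S g ℓ) := by
    intro s
    induction s using Finset.induction_on with
    | empty =>
      have h1 : (fun j : Fin g => if j ∈ (∅ : Finset (Fin g)) then d j else 1) =
          fun _ : Fin g => (1:ℝ) := by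
        funext j
        simp
      rw [h1, diagonal_one, gD_one]
      exact subset_closure (one_S g)
    | @insert i s hi ih =>
      have hsplit : (fun j => if j ∈ insert i s then d j else 1) =
          fun j => upd1 g i (d i) j * (if j ∈ s then d j else 1) := by
        funext j
        rcases eq_or_ne j i with rfl | hj
        · simp [upd1, hi]
        · simp [upd1, Function.update_of_ne hj, Finset.mem_insert, hj]
      rw [hsplit, ← diagonal_mul_diagonal, gD_mul]
      exact C_mul g hℓ2
        (by rw [gD_diag_upd1 g i (d i) (hd i)]; exact torus_mem g hℓ2 i (d i) (hd i)) ih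
  have h2 := key Finset.univ
  have h3 : (fun j : Fin g => if j ∈ Finset.univ then d j else 1) = d := by
    funext j
    simp
  rwa [h3] at h2

lemma gD_listprod_mem (hℓ2 : 2 ≤ ℓ) (L : List (Matrix.TransvectionStruct (Fin g) ℝ)) :
    gD g (L.map Matrix.TransvectionStruct.toMatrix).prod ∈ closure (S g ℓ) := by
  induction L with
  | nil =>
    simp only [List.map_nil, List.prod_nil, gD_one]
    exact subset_closure (one_S g)
  | cons t L ih =>
    rw [List.map_cons, List.prod_cons, gD_mul]
    refine C_mul g hℓ2 ?_ ih
    have h1 : Matrix.TransvectionStruct.toMatrix t = Matrix.transvection t.i t.j t.c := rfl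
    rw [h1]
    exact gD_transvection_mem g hℓ2 t.i t.j t.hij t.c

lemma gD_invertible_mem (hℓ2 : 2 ≤ ℓ) (E : Matrix (Fin g) (Fin g) ℝ) (hE : E.det ≠ 0) :
    gD g E ∈ closure (S g ℓ) := by
  obtain ⟨L, L', D, hD⟩ := Matrix.Pivot.exists_list_transvec_mul_diagonal_mul_list_transvec E
  have hDne : ∀ i, D i ≠ 0 := by
    intro i
    have hdet : E.det = (diagonal D).det := by
      rw [hD]
      simp [Matrix.det_mul]
    rw [hdet, Matrix.det_diagonal] at hE
    intro h0
    exact hE (Finset.prod_eq_zero (Finset.mem_univ i) h0)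
  rw [hD, gD_mul, gD_mul]
  exact C_mul g hℓ2 (C_mul g hℓ2 (gD_listprod_mem g hℓ2 L) (gD_diag_mem g hℓ2 D hDne))
    (gD_listprod_mem g hℓ2 L')

lemma Jm_eq_neg_J : Jm g = -(Matrix.J (Fin g) ℝ) := by
  rw [Jm, Matrix.J]
  ext i j
  rcases i with i | i <;> rcases j with j | j <;> simp

lemma mem_symp_iff (M : Mat g) :
    M ∈ Matrix.symplecticGroup (Fin g) ℝ ↔ M * Jm g * Mᵀ = Jm g := by
  rw [SymplecticGroup.mem_iff, show Matrix.J (Fin g) ℝ = -(Jm g) by rw [Jm_eq_neg_J]; simp]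
  constructor
  · intro h
    have := congrArg Neg.neg h
    simpa [Matrix.mul_neg, Matrix.neg_mul] using this
  · intro h
    rw [Matrix.mul_neg, Matrix.neg_mul, h]

lemma sp_transpose (M : Mat g) (hM : M * Jm g * Mᵀ = Jm g) : Mᵀ * Jm g * M = Jm g := by
  have h1 : M ∈ Matrix.symplecticGroup (Fin g) ℝ := (mem_symp_iff g M).2 hM
  have h2 := SymplecticGroup.transpose_mem h1
  have h3 := (mem_symp_iff g Mᵀ).1 h2
  rwa [Matrix.transpose_transpose] at h3

lemma sp_mul (M N : Mat g) (hM : M * Jm g * Mᵀ = Jm g) (hN : N * Jm g * Nᵀ = Jm g) :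
    (M * N) * Jm g * (M * N)ᵀ = Jm g := by
  have h : M * N * Jm g * (M * N)ᵀ = M * (N * Jm g * Nᵀ) * Mᵀ := by
    rw [Matrix.transpose_mul]
    noncomm_ring
  rw [h, hN, hM]

lemma sp_eqs (A B C D : Matrix (Fin g) (Fin g) ℝ)
    (h : Matrix.fromBlocks A B C D * Jm g * (Matrix.fromBlocks A B C D)ᵀ = Jm g) :
    A * Dᵀ - B * Cᵀ = 1 ∧ C * Dᵀ = D * Cᵀ := by
  have e : Matrix.fromBlocks A B C D * Jm g * (Matrix.fromBlocks A B C D)ᵀ =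
      Matrix.fromBlocks (A * Bᵀ - B * Aᵀ) (A * Dᵀ - B * Cᵀ)
        (C * Bᵀ - D * Aᵀ) (C * Dᵀ - D * Cᵀ) := by
    rw [Jm, fromBlocks_transpose, fromBlocks_multiply, fromBlocks_multiply, fromBlocks_inj]
    refine ⟨by noncomm_ring, by noncomm_ring, by noncomm_ring, by noncomm_ring⟩
  rw [e, Jm, fromBlocks_inj] at h
  obtain ⟨h11, h12, h21, h22⟩ := h
  exact ⟨h12, by rwa [sub_eq_zero] at h22⟩

lemma gU_mul_gU (B₁ B₂ : Matrix (Fin g) (Fin g) ℝ) : gU g B₁ * gU g B₂ = gU g (B₂ + B₁) := by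
  rw [gU, gU, gU, fromBlocks_multiply]
  simp

lemma gU_zero : gU g 0 = 1 := by
  rw [gU, Matrix.fromBlocks_one]

lemma bigcell_mem (hℓ2 : 2 ≤ ℓ) (A B C D : Matrix (Fin g) (Fin g) ℝ)
    (hM : Matrix.fromBlocks A B C D * Jm g * (Matrix.fromBlocks A B C D)ᵀ = Jm g)
    (hD : D.det ≠ 0) : Matrix.fromBlocks A B C D ∈ closure (S g ℓ) := by
  have hDu : IsUnit D.det := isUnit_iff_ne_zero.2 hD
  have hDtu : IsUnit Dᵀ.det := by rwa [Matrix.det_transpose]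
  obtain ⟨r12, r22⟩ := sp_eqs g A B C D hM
  obtain ⟨t12, t22⟩ := sp_eqs g Aᵀ Cᵀ Bᵀ Dᵀ (by
    rw [← fromBlocks_transpose, Matrix.transpose_transpose]
    exact sp_transpose g _ hM)
  -- t12 : Aᵀ * D - Cᵀ * B = 1 (after transpose_transpose), t22 : Bᵀ * D = Dᵀ * B
  simp only [Matrix.transpose_transpose] at t12 t22
  have hDDinv : D * D⁻¹ = 1 := Matrix.mul_nonsing_inv D hDu
  have hDinvD : D⁻¹ * D = 1 := Matrix.nonsing_inv_mul D hDu
  have hDtinv : Dᵀ * Dᵀ⁻¹ = 1 := Matrix.mul_nonsing_inv Dᵀ hDtu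
  have hDtinvD : Dᵀ⁻¹ * Dᵀ = 1 := Matrix.nonsing_inv_mul Dᵀ hDtu
  -- symmetry of X := B * D⁻¹
  have hXsym : (B * D⁻¹)ᵀ = B * D⁻¹ := by
    rw [Matrix.transpose_mul, Matrix.transpose_nonsing_inv]
    calc Dᵀ⁻¹ * Bᵀ = Dᵀ⁻¹ * (Bᵀ * (D * D⁻¹)) := by rw [hDDinv, Matrix.mul_one]
      _ = Dᵀ⁻¹ * (Bᵀ * D) * D⁻¹ := by noncomm_ring
      _ = Dᵀ⁻¹ * (Dᵀ * B) * D⁻¹ := by rw [t22]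
      _ = (Dᵀ⁻¹ * Dᵀ) * B * D⁻¹ := by noncomm_ring
      _ = B * D⁻¹ := by rw [hDtinvD, Matrix.one_mul]
  -- symmetry of Y := D⁻¹ * C
  have hCD : Cᵀ * Dᵀ⁻¹ = D⁻¹ * C := by
    calc Cᵀ * Dᵀ⁻¹ = (D⁻¹ * D) * (Cᵀ * Dᵀ⁻¹) := by rw [hDinvD, Matrix.one_mul]
      _ = D⁻¹ * (D * Cᵀ) * Dᵀ⁻¹ := by noncomm_ring
      _ = D⁻¹ * (C * Dᵀ) * Dᵀ⁻¹ := by rw [r22]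
      _ = D⁻¹ * C * (Dᵀ * Dᵀ⁻¹) := by noncomm_ring
      _ = D⁻¹ * C := by rw [hDtinv, Matrix.mul_one]
  have hYsym : (D⁻¹ * C)ᵀ = D⁻¹ * C := by
    rw [Matrix.transpose_mul, Matrix.transpose_nonsing_inv]
    exact hCD
  -- the factorization
  have hA : A = Dᵀ⁻¹ + B * (D⁻¹ * C) := by
    have h1 : A * Dᵀ = 1 + B * Cᵀ := by rw [← r12]; noncomm_ring
    calc A = A * (Dᵀ * Dᵀ⁻¹) := by rw [hDtinv, Matrix.mul_one]
      _ = (A * Dᵀ) * Dᵀ⁻¹ := by noncomm_ring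
      _ = (1 + B * Cᵀ) * Dᵀ⁻¹ := by rw [h1]
      _ = Dᵀ⁻¹ + B * (Cᵀ * Dᵀ⁻¹) := by noncomm_ring
      _ = Dᵀ⁻¹ + B * (D⁻¹ * C) := by rw [hCD]
  have hgD : gD g Dᵀ⁻¹ = Matrix.fromBlocks Dᵀ⁻¹ 0 0 D := by
    rw [gD, Matrix.nonsing_inv_nonsing_inv Dᵀ hDtu, Matrix.transpose_transpose]
  have step1 : gU g (B * D⁻¹) * Matrix.fromBlocks Dᵀ⁻¹ 0 0 D =
      Matrix.fromBlocks Dᵀ⁻¹ B 0 D := by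
    rw [gU, fromBlocks_multiply, fromBlocks_inj]
    refine ⟨by simp, ?_, by simp, by simp⟩
    rw [Matrix.one_mul, zero_add, Matrix.mul_assoc, hDinvD, Matrix.mul_one]
  have step2 : Matrix.fromBlocks Dᵀ⁻¹ B 0 D * gL g (D⁻¹ * C) =
      Matrix.fromBlocks (Dᵀ⁻¹ + B * (D⁻¹ * C)) B C D := by
    rw [gL, fromBlocks_multiply, fromBlocks_inj]
    refine ⟨by simp, by simp, ?_, by simp⟩
    rw [Matrix.zero_mul, zero_add, ← Matrix.mul_assoc, hDDinv, Matrix.one_mul]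
  have hfact : Matrix.fromBlocks A B C D = gU g (B * D⁻¹) * gD g Dᵀ⁻¹ * gL g (D⁻¹ * C) := by
    rw [hgD, Matrix.mul_assoc, ← Matrix.mul_assoc (gU g (B * D⁻¹)), step1, step2, hA]
  rw [hfact]
  have hdetinv : Dᵀ⁻¹.det ≠ 0 := by
    rw [Matrix.det_nonsing_inv, Ring.inverse_eq_inv']
    exact inv_ne_zero (by rwa [Matrix.det_transpose])
  exact C_mul g hℓ2 (C_mul g hℓ2 (gU_mem g hℓ2 _ hXsym)
    (gD_invertible_mem g hℓ2 _ hdetinv)) (gL_mem g hℓ2 _ hYsym)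

lemma dp_self_nonneg (v : Fin g → ℝ) : 0 ≤ v ⬝ᵥ v :=
  Finset.sum_nonneg fun i _ => mul_self_nonneg (v i)

lemma exists_shear (C D : Matrix (Fin g) (Fin g) ℝ) (hsym : C * Dᵀ = D * Cᵀ)
    (hker : ∀ v : Fin g → ℝ, Cᵀ *ᵥ v = 0 → Dᵀ *ᵥ v = 0 → v = 0) :
    ∃ s : ℝ, (s • C + D).det ≠ 0 := by
  classical
  have key : ∀ (A : Matrix (Fin g) (Fin g) ℝ) (w : Fin g → ℝ),
      w ⬝ᵥ ((A * Aᵀ) *ᵥ w) = (Aᵀ *ᵥ w) ⬝ᵥ (Aᵀ *ᵥ w) := by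
    intro A w
    conv_lhs => rw [← Matrix.mulVec_mulVec, Matrix.dotProduct_mulVec, ← Matrix.mulVec_transpose]
  have hreal : (C * Cᵀ + D * Dᵀ).det ≠ 0 := by
    have hker2 : ∀ w : Fin g → ℝ, (C * Cᵀ + D * Dᵀ) *ᵥ w = 0 → w = 0 := by
      intro w h0
      have hdot : w ⬝ᵥ ((C * Cᵀ + D * Dᵀ) *ᵥ w) =
          (Cᵀ *ᵥ w) ⬝ᵥ (Cᵀ *ᵥ w) + (Dᵀ *ᵥ w) ⬝ᵥ (Dᵀ *ᵥ w) := by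
        rw [Matrix.add_mulVec, dotProduct_add, key C w, key D w]
      rw [h0, dotProduct_zero] at hdot
      have hC := dp_self_nonneg g (Cᵀ *ᵥ w)
      have hD := dp_self_nonneg g (Dᵀ *ᵥ w)
      have hCz : (Cᵀ *ᵥ w) ⬝ᵥ (Cᵀ *ᵥ w) = 0 := by linarith
      have hDz : (Dᵀ *ᵥ w) ⬝ᵥ (Dᵀ *ᵥ w) = 0 := by linarith
      exact hker w (dotProduct_self_eq_zero.mp hCz) (dotProduct_self_eq_zero.mp hDz)
    have hinj : Function.Injective ((C * Cᵀ + D * Dᵀ).mulVec) := by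
      intro u v huv
      have h := hker2 (u - v) (by rw [Matrix.mulVec_sub, huv, sub_self])
      exact sub_eq_zero.mp h
    have hunit := Matrix.mulVec_injective_iff_isUnit.mp hinj
    exact isUnit_iff_ne_zero.mp ((Matrix.isUnit_iff_isUnit_det _).mp hunit)
  set f := Complex.ofRealHom with hf
  set Cc := C.map f with hCc
  set Dc := D.map f with hDc
  have hmap_sym : Cc * Dcᵀ = Dc * Ccᵀ := by
    rw [hCc, hDc, ← Matrix.transpose_map, ← Matrix.transpose_map, ← Matrix.map_mul,
      ← Matrix.map_mul, hsym]
  have hZW : (Complex.I • Cc + Dc) * ((-Complex.I) • Ccᵀ + Dcᵀ) =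
      (C * Cᵀ + D * Dᵀ).map f := by
    rw [Matrix.add_mul, Matrix.mul_add, Matrix.mul_add]
    simp only [smul_mul_assoc, mul_smul_comm, smul_smul]
    rw [Matrix.map_add (f : ℝ → ℂ) (map_add f), Matrix.map_mul, Matrix.map_mul,
      Matrix.transpose_map, Matrix.transpose_map, ← hCc, ← hDc, hmap_sym]
    have hII : -Complex.I * Complex.I = 1 := by rw [neg_mul, Complex.I_mul_I, neg_neg]
    rw [hII, one_smul, neg_smul]
    abel
  set P : Polynomial ℂ :=
    (Matrix.of fun i j => Polynomial.C (Cc i j) * Polynomial.X + Polynomial.C (Dc i j)).det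
    with hP
  have heval : ∀ z : ℂ, P.eval z = (z • Cc + Dc).det := by
    intro z
    rw [hP, ← Polynomial.coe_evalRingHom, RingHom.map_det, RingHom.mapMatrix_apply]
    congr 1
    ext i j
    simp only [Matrix.map_apply, Matrix.of_apply, Polynomial.coe_evalRingHom,
      Polynomial.eval_add, Polynomial.eval_mul, Polynomial.eval_C, Polynomial.eval_X,
      Matrix.add_apply, Matrix.smul_apply, smul_eq_mul]
    ring
  have hZdet : (Complex.I • Cc + Dc).det ≠ 0 := by
    have hdetmul : (Complex.I • Cc + Dc).det * ((-Complex.I) • Ccᵀ + Dcᵀ).det ≠ 0 := by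
      rw [← Matrix.det_mul, hZW, ← RingHom.mapMatrix_apply, ← RingHom.map_det]
      simpa using hreal
    exact left_ne_zero_of_mul hdetmul
  have hPne : P ≠ 0 := by
    intro h0
    apply hZdet
    rw [← heval Complex.I, h0, Polynomial.eval_zero]
  have hfin : {x : ℂ | P.IsRoot x}.Finite := Polynomial.finite_setOf_isRoot hPne
  have hfinR : {s : ℝ | P.IsRoot (s : ℂ)}.Finite := by
    have he : {s : ℝ | P.IsRoot (s:ℂ)} = (fun s : ℝ => (s:ℂ)) ⁻¹' {x | P.IsRoot x} := rfl
    rw [he]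
    exact Set.Finite.preimage (Function.Injective.injOn Complex.ofReal_injective) hfin
  obtain ⟨s, hs⟩ := (hfinR.infinite_compl).nonempty
  refine ⟨s, ?_⟩
  have h1 : ((s • C + D).map (f : ℝ → ℂ)).det = P.eval (s : ℂ) := by
    rw [heval]
    congr 1
    ext i j
    simp only [Matrix.map_apply, Matrix.add_apply, Matrix.smul_apply, smul_eq_mul, _root_.map_add,
      _root_.map_mul, hCc, hDc, hf]
    simp
  intro h0
  apply hs
  show P.IsRoot (s:ℂ)
  have h2 : ((s • C + D).map (f : ℝ → ℂ)).det = 0 := by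
    rw [← RingHom.mapMatrix_apply, ← RingHom.map_det, h0, map_zero]
  rw [Polynomial.IsRoot, ← h1, h2]

lemma dense_main (hℓ2 : 2 ≤ ℓ) (M : Mat g) (hM : M * Jm g * Mᵀ = Jm g) :
    M ∈ closure (S g ℓ) := by
  have hMb : M = Matrix.fromBlocks M.toBlocks₁₁ M.toBlocks₁₂ M.toBlocks₂₁ M.toBlocks₂₂ :=
    (fromBlocks_toBlocks M).symm
  set A := M.toBlocks₁₁
  set B := M.toBlocks₁₂
  set Cb := M.toBlocks₂₁
  set Db := M.toBlocks₂₂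
  rw [hMb] at hM ⊢
  obtain ⟨r12, r22⟩ := sp_eqs g A B Cb Db hM
  have hker : ∀ v : Fin g → ℝ, Cbᵀ *ᵥ v = 0 → Dbᵀ *ᵥ v = 0 → v = 0 := by
    intro v hC hD
    have h := congrArg (fun X => X *ᵥ v) r12
    simp only [Matrix.sub_mulVec, ← Matrix.mulVec_mulVec, hC, hD, Matrix.mulVec_zero,
      Matrix.one_mulVec, sub_self] at h
    exact h.symm
  obtain ⟨s, hs⟩ := exists_shear g Cb Db r22 hker
  have hsym1 : (s • (1 : Matrix (Fin g) (Fin g) ℝ))ᵀ = s • 1 := by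
    rw [Matrix.transpose_smul, Matrix.transpose_one]
  have hsym2 : (-(s • (1 : Matrix (Fin g) (Fin g) ℝ)))ᵀ = -(s • 1) := by
    rw [Matrix.transpose_neg, hsym1]
  have hUsp : gU g (s • 1) * Jm g * (gU g (s • 1))ᵀ = Jm g := gU_sp g _ hsym1
  have hM' := sp_mul g _ _ hM hUsp
  have hblocks : Matrix.fromBlocks A B Cb Db * gU g (s • 1) =
      Matrix.fromBlocks A (s • A + B) Cb (s • Cb + Db) := by
    rw [gU, fromBlocks_multiply, fromBlocks_inj]
    refine ⟨by simp, ?_, by simp, ?_⟩ <;>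
    · rw [mul_smul_comm, Matrix.mul_one, Matrix.mul_one]
  rw [hblocks] at hM'
  have hmem' : Matrix.fromBlocks A (s • A + B) Cb (s • Cb + Db) ∈ closure (S g ℓ) :=
    bigcell_mem g hℓ2 _ _ _ _ hM' hs
  have hfin : Matrix.fromBlocks A (s • A + B) Cb (s • Cb + Db) * gU g (-(s • 1)) =
      Matrix.fromBlocks A B Cb Db := by
    rw [← hblocks, Matrix.mul_assoc, gU_mul_gU, neg_add_cancel, gU_zero, Matrix.mul_one]
  rw [← hfin]
  exact C_mul g hℓ2 hmem' (gU_mem g hℓ2 _ hsym2)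

end Matrices

end SympDense

open Matrix

/-- For a positive integer `g` and a prime `ℓ`, the subgroup
`Sp₂g(ℤ[1/ℓ])` of real symplectic matrices all of whose entries lie in `ℤ[1/ℓ]`
(i.e. are of the form `a / ℓᵏ` with `a ∈ ℤ`, `k ∈ ℕ`) is dense in `Sp₂g(ℝ)`:
the closure of the set of such matrices contains every real symplectic matrix,
where `J = [[0, 1], [−1, 0]]`. -/
theorem symplectic_Z_inv_ell_dense (g : ℕ) (hg : 0 < g) (ℓ : ℕ) (hℓ : ℓ.Prime)
    (M : Matrix (Fin g ⊕ Fin g) (Fin g ⊕ Fin g) ℝ)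
    (hM : M * Matrix.fromBlocks 0 1 (-1) 0 * Mᵀ = Matrix.fromBlocks 0 1 (-1) 0) :
    M ∈ closure {N : Matrix (Fin g ⊕ Fin g) (Fin g ⊕ Fin g) ℝ |
      N * Matrix.fromBlocks 0 1 (-1) 0 * Nᵀ = Matrix.fromBlocks 0 1 (-1) 0 ∧
      ∀ i j, ∃ (a : ℤ) (k : ℕ), N i j = (a : ℝ) / ℓ ^ k} := by
  exact SympDense.dense_main (ℓ := ℓ) g hℓ.two_le M hM
end
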